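/- Let (X, 𝒳) and (Y, 𝒴) be measurable spaces, μ, μ̃ probability measures on X, and K, K̃ : X → 𝒫(Y) stochastic kernels. Let 𝒬 = μ ⊗ K and 𝒬̃ = μ̃ ⊗ K̃ be the product measures on X × Y. Then ‖𝒬 - 𝒬̃‖ ≤ ‖μ - μ̃‖ + ‖K - K̃‖, where ‖K - K̃‖ := sup_{x ∈ X} ‖K_x - K̃_x‖. -/

import Mathlib

open MeasureTheory ProbabilityTheory
open scoped ENNReal

/-- Total mass (as a real number) of a measure. -/
noncomputable def mass {X : Type*} [MeasurableSpace X] (μ : Measure X) : ℝ :=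
  (μ Set.univ).toReal

/-- Total variation distance `‖ν - ν'‖` between two finite measures. -/
noncomputable def tvDist {X : Type*} [MeasurableSpace X] (ν ν' : Measure X)
    [IsFiniteMeasure ν] [IsFiniteMeasure ν'] : ℝ :=
  (((ν.toSignedMeasure - ν'.toSignedMeasure).totalVariation) Set.univ).toReal

/-- The minimum `ν ∧ ν' := ν - (ν - ν')⁻` of two finite measures, via the
Hahn–Jordan decomposition of `ν - ν'`. -/
noncomputable def measInf {X : Type*} [MeasurableSpace X] (ν ν' : Measure X)
    [IsFiniteMeasure ν] [IsFiniteMeasure ν'] : Measure X :=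
  ν - (ν.toSignedMeasure - ν'.toSignedMeasure).toJordanDecomposition.negPart

namespace TVAux

variable {X : Type*} [MeasurableSpace X]

noncomputable def pos (ν ν' : Measure X) [IsFiniteMeasure ν] [IsFiniteMeasure ν'] : Measure X :=
  (ν.toSignedMeasure - ν'.toSignedMeasure).toJordanDecomposition.posPart

noncomputable def neg (ν ν' : Measure X) [IsFiniteMeasure ν] [IsFiniteMeasure ν'] : Measure X :=
  (ν.toSignedMeasure - ν'.toSignedMeasure).toJordanDecomposition.negPart

instance (ν ν' : Measure X) [IsFiniteMeasure ν] [IsFiniteMeasure ν'] :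
    IsFiniteMeasure (pos ν ν') := by unfold pos; infer_instance

instance (ν ν' : Measure X) [IsFiniteMeasure ν] [IsFiniteMeasure ν'] :
    IsFiniteMeasure (neg ν ν') := by unfold neg; infer_instance

lemma jd_eq (ν ν' : Measure X) [IsFiniteMeasure ν] [IsFiniteMeasure ν'] :
    ν + neg ν ν' = ν' + pos ν ν' := by
  set s := ν.toSignedMeasure - ν'.toSignedMeasure with hs
  ext A hA
  have h1 : s A = (ν A).toReal - (ν' A).toReal := by
    rw [hs, VectorMeasure.sub_apply, Measure.toSignedMeasure_apply_measurable hA,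
      Measure.toSignedMeasure_apply_measurable hA]
    rfl
  have h2 : s A = (pos ν ν' A).toReal - (neg ν ν' A).toReal := by
    conv_lhs => rw [← s.toSignedMeasure_toJordanDecomposition]
    rw [JordanDecomposition.toSignedMeasure, VectorMeasure.sub_apply,
      Measure.toSignedMeasure_apply_measurable hA, Measure.toSignedMeasure_apply_measurable hA]
    rfl
  have key : (ν A).toReal + (neg ν ν' A).toReal = (ν' A).toReal + (pos ν ν' A).toReal := by
    linarith [h1, h2.symm.trans h1]
  rw [Measure.add_apply, Measure.add_apply]
  rw [← ENNReal.toReal_eq_toReal_iff' (by finiteness) (by finiteness),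
    ENNReal.toReal_add (by finiteness) (by finiteness),
    ENNReal.toReal_add (by finiteness) (by finiteness)]
  exact key

lemma jd_eq_apply (ν ν' : Measure X) [IsFiniteMeasure ν] [IsFiniteMeasure ν'] (A : Set X) :
    ν A + neg ν ν' A = ν' A + pos ν ν' A := by
  conv_lhs => rw [← Measure.add_apply, jd_eq, Measure.add_apply]

lemma tvDist_eq (ν ν' : Measure X) [IsFiniteMeasure ν] [IsFiniteMeasure ν'] :
    tvDist ν ν' = (pos ν ν' Set.univ).toReal + (neg ν ν' Set.univ).toReal := by
  rw [tvDist, SignedMeasure.totalVariation, Measure.add_apply,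
    ENNReal.toReal_add (by finiteness) (by finiteness)]
  rfl

lemma tvDist_nonneg (ν ν' : Measure X) [IsFiniteMeasure ν] [IsFiniteMeasure ν'] :
    0 ≤ tvDist ν ν' := ENNReal.toReal_nonneg

lemma pos_univ_eq_neg_univ (ν ν' : Measure X) [IsProbabilityMeasure ν] [IsProbabilityMeasure ν'] :
    pos ν ν' Set.univ = neg ν ν' Set.univ := by
  have h := jd_eq_apply ν ν' Set.univ
  simp only [measure_univ] at h
  exact (ENNReal.add_right_inj ENNReal.one_ne_top).mp h |>.symm

lemma tvDist_eq_two_mul (ν ν' : Measure X) [IsProbabilityMeasure ν] [IsProbabilityMeasure ν'] :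
    tvDist ν ν' = 2 * (pos ν ν' Set.univ).toReal := by
  rw [tvDist_eq, ← pos_univ_eq_neg_univ]; ring

lemma pos_univ_eq_ofReal (ν ν' : Measure X) [IsProbabilityMeasure ν] [IsProbabilityMeasure ν'] :
    pos ν ν' Set.univ = ENNReal.ofReal (tvDist ν ν' / 2) := by
  rw [tvDist_eq_two_mul]
  rw [mul_div_cancel_left₀ _ (two_ne_zero), ENNReal.ofReal_toReal (by finiteness)]

/-- If `ν A ≤ ν' A + c` for all measurable `A`, then the positive part has mass `≤ c`. -/
lemma pos_univ_le (ν ν' : Measure X) [IsFiniteMeasure ν] [IsFiniteMeasure ν'] {c : ℝ≥0∞}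
    (h : ∀ A : Set X, MeasurableSet A → ν A ≤ ν' A + c) : pos ν ν' Set.univ ≤ c := by
  set j := (ν.toSignedMeasure - ν'.toSignedMeasure).toJordanDecomposition with hj
  obtain ⟨u, hu, hpu, hnu⟩ := j.mutuallySingular
  have hmeas : MeasurableSet u := hu
  have h1 : pos ν ν' Set.univ = pos ν ν' uᶜ := by
    have := measure_add_measure_compl (μ := pos ν ν') hmeas
    rw [show pos ν ν' u = 0 from hpu] at this
    rw [← this, zero_add]
  have h2 : neg ν ν' uᶜ = 0 := hnu
  have h3 := jd_eq_apply ν ν' uᶜ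
  rw [h2, add_zero] at h3
  have h4 : ν' uᶜ + pos ν ν' uᶜ ≤ ν' uᶜ + c := by
    rw [← h3]; exact h uᶜ hmeas.compl
  rw [h1]
  exact (ENNReal.add_le_add_iff_left (by finiteness)).mp h4

/-- pointwise set bound -/
lemma meas_le (ν ν' : Measure X) [IsFiniteMeasure ν] [IsFiniteMeasure ν'] (A : Set X) :
    ν A ≤ ν' A + pos ν ν' Set.univ := by
  calc ν A ≤ ν A + neg ν ν' A := le_self_add
    _ = ν' A + pos ν ν' A := jd_eq_apply ν ν' A
    _ ≤ ν' A + pos ν ν' Set.univ := add_le_add_right (measure_mono (Set.subset_univ A)) _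

lemma lintegral_le (ν ν' : Measure X) [IsFiniteMeasure ν] [IsFiniteMeasure ν']
    {f : X → ℝ≥0∞} (hf : ∀ x, f x ≤ 1) :
    ∫⁻ x, f x ∂ν ≤ ∫⁻ x, f x ∂ν' + pos ν ν' Set.univ := by
  calc ∫⁻ x, f x ∂ν ≤ ∫⁻ x, f x ∂(ν + neg ν ν') :=
        lintegral_mono' (Measure.le_add_right le_rfl) le_rfl
    _ = ∫⁻ x, f x ∂(ν' + pos ν ν') := by rw [jd_eq]
    _ = ∫⁻ x, f x ∂ν' + ∫⁻ x, f x ∂(pos ν ν') := lintegral_add_measure _ _ _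
    _ ≤ ∫⁻ x, f x ∂ν' + pos ν ν' Set.univ := by
        refine add_le_add_right ?_ _
        calc ∫⁻ x, f x ∂(pos ν ν') ≤ ∫⁻ _, 1 ∂(pos ν ν') := lintegral_mono hf
          _ = pos ν ν' Set.univ := by simp

lemma tvDist_le_two (ν ν' : Measure X) [IsProbabilityMeasure ν] [IsProbabilityMeasure ν'] :
    tvDist ν ν' ≤ 2 := by
  have hle : pos ν ν' Set.univ ≤ 1 :=
    pos_univ_le ν ν' (fun A hA => by
      calc ν A ≤ 1 := prob_le_one
        _ ≤ ν' A + 1 := le_add_self)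
  rw [tvDist_eq_two_mul]
  have := ENNReal.toReal_mono ENNReal.one_ne_top hle
  simp only [ENNReal.toReal_one] at this
  linarith

end TVAux

/-- Perturbation of a measure–kernel product in total variation:
`‖μ ⊗ K − μ' ⊗ K'‖ ≤ ‖μ − μ'‖ + sup_x ‖K_x − K'_x‖`. -/
theorem stmt1 {X Y : Type*} [MeasurableSpace X] [MeasurableSpace Y]
    (μ μ' : Measure X) [IsProbabilityMeasure μ] [IsProbabilityMeasure μ']
    (K K' : Kernel X Y) [IsMarkovKernel K] [IsMarkovKernel K'] :
    tvDist (μ ⊗ₘ K) (μ' ⊗ₘ K') ≤ tvDist μ μ' + ⨆ x : X, tvDist (K x) (K' x) := by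
  set a := tvDist μ μ' with ha
  set b := ⨆ x : X, tvDist (K x) (K' x) with hb
  have hbdd : BddAbove (Set.range fun x => tvDist (K x) (K' x)) :=
    ⟨2, by rintro _ ⟨x, rfl⟩; exact TVAux.tvDist_le_two _ _⟩
  have hb0 : 0 ≤ b := Real.iSup_nonneg fun x => TVAux.tvDist_nonneg _ _
  have ha0 : 0 ≤ a := TVAux.tvDist_nonneg _ _
  have key : ∀ A : Set (X × Y), MeasurableSet A →
      (μ ⊗ₘ K) A ≤ (μ' ⊗ₘ K') A + (ENNReal.ofReal (a / 2) + ENNReal.ofReal (b / 2)) := by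
    intro A hA
    have hptwise : ∀ x, K x (Prod.mk x ⁻¹' A) ≤ K' x (Prod.mk x ⁻¹' A) + ENNReal.ofReal (b / 2) := by
      intro x
      refine (TVAux.meas_le (K x) (K' x) _).trans (add_le_add_right ?_ _)
      rw [TVAux.pos_univ_eq_ofReal]
      exact ENNReal.ofReal_le_ofReal (by
        have := le_ciSup hbdd x
        linarith)
    calc (μ ⊗ₘ K) A = ∫⁻ x, K x (Prod.mk x ⁻¹' A) ∂μ := Measure.compProd_apply hA
      _ ≤ ∫⁻ x, (K' x (Prod.mk x ⁻¹' A) + ENNReal.ofReal (b / 2)) ∂μ := lintegral_mono hptwise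
      _ = ∫⁻ x, K' x (Prod.mk x ⁻¹' A) ∂μ + ENNReal.ofReal (b / 2) := by
          rw [lintegral_add_right _ measurable_const, lintegral_const, measure_univ, mul_one]
      _ ≤ (∫⁻ x, K' x (Prod.mk x ⁻¹' A) ∂μ' + TVAux.pos μ μ' Set.univ) + ENNReal.ofReal (b / 2) :=
          add_le_add_left (TVAux.lintegral_le μ μ' (fun x => prob_le_one)) _
      _ = (μ' ⊗ₘ K') A + (ENNReal.ofReal (a / 2) + ENNReal.ofReal (b / 2)) := by
          rw [Measure.compProd_apply hA, TVAux.pos_univ_eq_ofReal, ← ha, add_assoc]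
  have hpos := TVAux.pos_univ_le (μ ⊗ₘ K) (μ' ⊗ₘ K') key
  rw [TVAux.tvDist_eq_two_mul]
  have h2 : (TVAux.pos (μ ⊗ₘ K) (μ' ⊗ₘ K') Set.univ).toReal ≤ (a + b) / 2 := by
    have := ENNReal.toReal_mono (by finiteness) hpos
    rw [← ENNReal.ofReal_add (by linarith) (by linarith),
      ENNReal.toReal_ofReal (by linarith)] at this
    linarith
  linarith
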